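/- In the setting of the isoperimetry proof (configuration in H, set G from the multi-scale construction, C_R the unique largest connected component of S ∩ B(0,R) and C_{2R} that of S ∩ B(0,2R)): let A ⊆ C_R, let M_A = {x ∈ G : C_x ∩ A ≠ ∅}, and let D_A = {x ∈ A : there exists y ∈ C_{2R}∖A with |x−y|_∞ ≤ 2L_s}. Then |∂_S A| ≥ max{ (1/(d·2^d))·|∂_G M_A| , |D_A|/(11·L_s)^d }; moreover there exists ρ > 0 such that if r_0/l_0 < ρ then |A| ≤ 6^d·L_0^d·|M_A| + |D_A|. -/

import Mathlib

open MeasureTheory Filter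
open scoped ENNReal

namespace Perco

/-- A point of the lattice `ℤ^d`. -/
abbrev Pt (d : ℕ) := Fin d → ℤ

/-- A percolation configuration on `ℤ^d`. -/
abbrev Config (d : ℕ) := Pt d → Bool

variable {d : ℕ}

/-- The `ℓ¹`-distance on `ℤ^d`. -/
def dist1 (x y : Pt d) : ℕ := ∑ i, (x i - y i).natAbs

/-- The `ℓ^∞`-distance on `ℤ^d`. -/
def distInf (x y : Pt d) : ℕ := Finset.univ.sup fun i => (x i - y i).natAbs

/-- The closed `ℓ^∞`-ball of radius `R` around `x`. -/
def ballZ (x : Pt d) (R : ℕ) : Set (Pt d) := {y | distInf x y ≤ R}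

/-- Nearest-neighbour adjacency in `ℤ^d`. -/
def adj (x y : Pt d) : Prop := dist1 x y = 1

/-- The occupied set of a configuration. -/
def SS (ω : Config d) : Set (Pt d) := {x | ω x = true}

/-- One step of a nearest-neighbour path staying inside `T`. -/
def stepRel (T : Set (Pt d)) (x y : Pt d) : Prop := adj x y ∧ x ∈ T ∧ y ∈ T

/-- `x` and `y` are connected by a nearest-neighbour path inside `T`. -/
def connIn (T : Set (Pt d)) (x y : Pt d) : Prop :=
  x ∈ T ∧ y ∈ T ∧ Relation.ReflTransGen (stepRel T) x y

/-- The connected component (cluster) of `x` in `T`. -/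
def cluster (T : Set (Pt d)) (x : Pt d) : Set (Pt d) := {y | connIn T x y}

/-- `S_r`: vertices of `S(ω)` in connected components of `ℓ¹`-diameter at least `r`. -/
def Sr (ω : Config d) (r : ℝ) : Set (Pt d) :=
  {x | x ∈ SS ω ∧ ∃ y ∈ cluster (SS ω) x, ∃ z ∈ cluster (SS ω) x, r ≤ (dist1 y z : ℝ)}

/-- `S_∞`: vertices of `S(ω)` in infinite connected components. -/
def Sinf (ω : Config d) : Set (Pt d) := {x | x ∈ SS ω ∧ (cluster (SS ω) x).Infinite}

/-- The shift of a configuration by `x`. -/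
def shift (x : Pt d) (ω : Config d) : Config d := fun y => ω (x + y)

/-- An increasing event. -/
def IncreasingEvent (G : Set (Config d)) : Prop :=
  ∀ ω ω' : Config d, (∀ x, ω x = true → ω' x = true) → ω ∈ G → ω' ∈ G

/-- A decreasing event. -/
def DecreasingEvent (G : Set (Config d)) : Prop :=
  ∀ ω ω' : Config d, (∀ x, ω' x = true → ω x = true) → ω ∈ G → ω' ∈ G

/-- The event `G` depends only on the coordinates in `B`. -/
def DependsOn (G : Set (Config d)) (B : Set (Pt d)) : Prop :=
  ∀ ω ω' : Config d, (∀ x ∈ B, ω x = ω' x) → (ω ∈ G ↔ ω' ∈ G)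

/-- The edge boundary of `A` in `Sset`: (directed representatives of) edges of `ℤ^d`
with one endpoint in `A` and the other in `Sset \ A`. -/
def edgeBd (Sset A : Set (Pt d)) : Set (Pt d × Pt d) :=
  {p | adj p.1 p.2 ∧ p.1 ∈ A ∧ p.2 ∈ Sset \ A}

/-- The density `η(u) = P[0 ∈ S_∞]` of the infinite cluster. -/
noncomputable def eta (d : ℕ) (P : Measure (Config d)) : ℝ :=
  (P {ω | (0 : Pt d) ∈ Sinf ω}).toReal

/-- The first local-uniqueness event of axiom S1. -/
def locUniq1 (d : ℕ) (R : ℕ) : Set (Config d) :=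
  {ω | (Sr ω R ∩ ballZ (0 : Pt d) R).Nonempty}

/-- The second local-uniqueness event of axiom S1. -/
def locUniq2 (d : ℕ) (R : ℕ) : Set (Config d) :=
  {ω | ∀ x ∈ Sr ω ((R : ℝ)/10) ∩ ballZ (0 : Pt d) R,
       ∀ y ∈ Sr ω ((R : ℝ)/10) ∩ ballZ (0 : Pt d) R,
       connIn (SS ω ∩ ballZ (0 : Pt d) (2*R)) x y}

/-- The axioms **P1**–**P3** and **S1**–**S2** of Drewitz–Ráth–Sapozhnikov for a
one-parameter family of probability measures on `{0,1}^{ℤ^d}`. -/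
structure Axioms (d : ℕ) (a b : ℝ) (P : ℝ → Measure (Config d)) where
  /-- decoupling exponent -/
  εP : ℝ
  /-- sprinkling exponent -/
  χP : ℝ
  RP : ℕ
  LP : ℕ
  fP : ℕ → ℝ
  fS : ℝ → ℕ → ℝ
  ΔS : ℝ → ℝ
  RS : ℝ → ℕ
  prob : ∀ u ∈ Set.Ioo a b, IsProbabilityMeasure (P u)
  /-- P1: every lattice shift is measure preserving and ergodic. -/
  ergodic : ∀ u ∈ Set.Ioo a b, ∀ x : Pt d, x ≠ 0 → Ergodic (shift x) (P u)
  /-- P2: monotonicity. -/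
  mono : ∀ u ∈ Set.Ioo a b, ∀ u' ∈ Set.Ioo a b, u ≤ u' →
    ∀ G : Set (Config d), MeasurableSet G → IncreasingEvent G → P u G ≤ P u' G
  εP_pos : 0 < εP
  χP_pos : 0 < χP
  fP_lb : ∀ L : ℕ, LP ≤ L → Real.exp ((Real.log L) ^ εP) ≤ fP L
  /-- P3, decoupling for decreasing events. -/
  decoupleDec : ∀ (R L : ℕ), RP ≤ R → 1 ≤ L → ∀ x₁ x₂ : Pt d, R * L ≤ distInf x₁ x₂ →
    ∀ u uh : ℝ, uh ∈ Set.Ioo a b → u ∈ Set.Ioo a b → uh < u →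
    (1 + (R : ℝ) ^ (-χP)) * uh ≤ u →
    ∀ A₁ A₂ : Set (Config d), MeasurableSet A₁ → MeasurableSet A₂ →
      DecreasingEvent A₁ → DecreasingEvent A₂ →
      DependsOn A₁ (ballZ x₁ (10*L)) → DependsOn A₂ (ballZ x₂ (10*L)) →
      (P u (A₁ ∩ A₂)).toReal ≤ (P uh A₁).toReal * (P uh A₂).toReal + Real.exp (-(fP L))
  /-- P3, decoupling for increasing events. -/
  decoupleInc : ∀ (R L : ℕ), RP ≤ R → 1 ≤ L → ∀ x₁ x₂ : Pt d, R * L ≤ distInf x₁ x₂ →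
    ∀ u uh : ℝ, uh ∈ Set.Ioo a b → u ∈ Set.Ioo a b → uh < u →
    (1 + (R : ℝ) ^ (-χP)) * uh ≤ u →
    ∀ B₁ B₂ : Set (Config d), MeasurableSet B₁ → MeasurableSet B₂ →
      IncreasingEvent B₁ → IncreasingEvent B₂ →
      DependsOn B₁ (ballZ x₁ (10*L)) → DependsOn B₂ (ballZ x₂ (10*L)) →
      (P uh (B₁ ∩ B₂)).toReal ≤ (P u B₁).toReal * (P u B₂).toReal + Real.exp (-(fP L))
  ΔS_pos : ∀ u ∈ Set.Ioo a b, 0 < ΔS u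
  fS_lb : ∀ u ∈ Set.Ioo a b, ∀ R : ℕ, RS u ≤ R → (Real.log R) ^ (1 + ΔS u) ≤ fS u R
  /-- S1, first part. -/
  S1a : ∀ u ∈ Set.Ioo a b, ∀ R : ℕ, 1 ≤ R →
    1 - Real.exp (-(fS u R)) ≤ (P u (locUniq1 d R)).toReal
  /-- S1, second part. -/
  S1b : ∀ u ∈ Set.Ioo a b, ∀ R : ℕ, 1 ≤ R →
    1 - Real.exp (-(fS u R)) ≤ (P u (locUniq2 d R)).toReal
  /-- S2: positivity of the density of the infinite cluster. -/
  S2pos : ∀ u ∈ Set.Ioo a b, 0 < eta d (P u)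
  /-- S2: continuity of the density of the infinite cluster. -/
  S2cont : ContinuousOn (fun u => eta d (P u)) (Set.Ioo a b)


/-! ### Renormalization scales and good/bad boxes -/

/-- The scales `l_k = l_0·4^{k^{θ_sc}}`. -/
def lSc (l0 θsc k : ℕ) : ℕ := l0 * 4 ^ (k ^ θsc)

/-- The scales `r_k = r_0·2^{k^{θ_sc}}`. -/
def rSc (r0 θsc k : ℕ) : ℕ := r0 * 2 ^ (k ^ θsc)

/-- The scales `L_0 = L_0`, `L_{k+1} = l_k·L_k`. -/
def LSc (l0 L0 θsc : ℕ) : ℕ → ℕ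
  | 0 => L0
  | k+1 => lSc l0 θsc k * LSc l0 L0 θsc k

/-- The renormalized lattice `G = L·ℤ^d`. -/
def lattice (d L : ℕ) : Set (Pt d) := {x | ∀ i, (L : ℤ) ∣ x i}

/-- The box `x + [0,n)^d`. -/
def box (x : Pt d) (n : ℕ) : Set (Pt d) := {y | ∀ i, x i ≤ y i ∧ y i < x i + n}

/-- The box `x + [lo,hi)^d`. -/
def boxI (x : Pt d) (lo hi : ℤ) : Set (Pt d) := {y | ∀ i, x i + lo ≤ y i ∧ y i < x i + hi}

/-- The corner `x + e·L_0` of the sub-box indexed by `e ∈ {0,1}^d`. -/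
def subCorner (x : Pt d) (L0 : ℕ) (e : Fin d → Bool) : Pt d :=
  fun i => x i + (if e i then (L0 : ℤ) else 0)

/-- `C` is a connected component of `S_{L0} ∩ B` of cardinality at least `(3/4)·η·L_0^d`. -/
def bigCompIn (ω : Config d) (η : ℝ) (L0 : ℕ) (B : Set (Pt d)) (C : Set (Pt d)) : Prop :=
  (∃ w ∈ Sr ω (L0 : ℝ) ∩ B, C = cluster (Sr ω (L0 : ℝ) ∩ B) w) ∧
  (3/4 : ℝ) * η * (L0 : ℝ) ^ d ≤ C.ncard

/-- The event `A^u_x`: each of the `2^d` sub-boxes of side `L_0` of `x + [0,2L_0)^d` contains a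
connected component of `S_{L_0}` with at least `(3/4)·η·L_0^d` vertices, and all these components
are connected in `S ∩ (x+[0,2L_0)^d)`. -/
def eventA (d : ℕ) (η : ℝ) (L0 : ℕ) (x : Pt d) : Set (Config d) :=
  {ω | (∀ e : Fin d → Bool, ∃ C, bigCompIn ω η L0 (box (subCorner x L0 e) L0) C) ∧
       (∀ e e' : Fin d → Bool, ∀ C C' : Set (Pt d), ∀ y z : Pt d,
          bigCompIn ω η L0 (box (subCorner x L0 e) L0) C →
          bigCompIn ω η L0 (box (subCorner x L0 e') L0) C' →
          y ∈ C → z ∈ C' → connIn (SS ω ∩ box x (2*L0)) y z)}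

/-- The event `B^u_x`: each of the `2^d` sub-boxes of side `L_0` of `x + [0,2L_0)^d` contains at
most `(5/4)·η·L_0^d` vertices of `S_{L_0}`. -/
def eventB (d : ℕ) (η : ℝ) (L0 : ℕ) (x : Pt d) : Set (Config d) :=
  {ω | ∀ e : Fin d → Bool,
    ((Sr ω (L0 : ℝ) ∩ box (subCorner x L0 e) L0).ncard : ℝ) ≤ (5/4 : ℝ) * η * (L0 : ℝ) ^ d}

/-- The recursive cascading of a family of "bad" seed events along the renormalization scheme. -/
def cascade (d : ℕ) (r0 l0 L0 θsc : ℕ) (seed : Pt d → Set (Config d)) :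
    ℕ → Pt d → Set (Config d)
  | 0, x => seed x
  | k+1, x => {ω | ∃ x₁ x₂ : Pt d,
      x₁ ∈ lattice d (LSc l0 L0 θsc k) ∩ box x (LSc l0 L0 θsc (k+1)) ∧
      x₂ ∈ lattice d (LSc l0 L0 θsc k) ∩ box x (LSc l0 L0 θsc (k+1)) ∧
      rSc r0 θsc k * LSc l0 L0 θsc k ≤ distInf x₁ x₂ ∧
      ω ∈ cascade d r0 l0 L0 θsc seed k x₁ ∧ ω ∈ cascade d r0 l0 L0 θsc seed k x₂}

/-- The event `Ā^u_{x,k}`. -/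
def Abar (d : ℕ) (η : ℝ) (r0 l0 L0 θsc : ℕ) : ℕ → Pt d → Set (Config d) :=
  cascade d r0 l0 L0 θsc (fun x => (eventA d η L0 x)ᶜ)

/-- The event `B̄^u_{x,k}`. -/
def Bbar (d : ℕ) (η : ℝ) (r0 l0 L0 θsc : ℕ) : ℕ → Pt d → Set (Config d) :=
  cascade d r0 l0 L0 θsc (fun x => (eventB d η L0 x)ᶜ)

/-- The event that `x ∈ G_k` is `k`-bad. -/
def kBad (d : ℕ) (η : ℝ) (r0 l0 L0 θsc k : ℕ) (x : Pt d) : Set (Config d) :=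
  Abar d η r0 l0 L0 θsc k x ∪ Bbar d η r0 l0 L0 θsc k x

/-- `s` is the largest integer with `L_s^{3d²} ≤ R^{θ_iso}`. -/
def isScaleS (d l0 L0 θsc : ℕ) (θiso : ℝ) (R s : ℕ) : Prop :=
  ((LSc l0 L0 θsc s : ℝ)) ^ (3*d^2) ≤ (R : ℝ) ^ θiso ∧
  ∀ s' : ℕ, ((LSc l0 L0 θsc s' : ℝ)) ^ (3*d^2) ≤ (R : ℝ) ^ θiso → s' ≤ s

/-- The event `H`: (a) every vertex of `G_r ∩ B(0,3R)` is `r`-good, and (b) any two points of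
`S_{L_s}` lying in a common box `z+[−2L_s,2L_s)^d`, `z ∈ B(0,2R)`, are connected inside
`S ∩ (z+[−4L_s,4L_s)^d)`. -/
def eventH (d : ℕ) (η : ℝ) (r0 l0 L0 θsc s r R : ℕ) : Set (Config d) :=
  {ω | (∀ z ∈ lattice d (LSc l0 L0 θsc r) ∩ ballZ (0 : Pt d) (3*R),
          ω ∉ kBad d η r0 l0 L0 θsc r z) ∧
       (∀ z ∈ ballZ (0 : Pt d) (2*R),
          ∀ x ∈ Sr ω ((LSc l0 L0 θsc s : ℕ) : ℝ) ∩
                boxI z (-(2*(LSc l0 L0 θsc s) : ℤ)) (2*(LSc l0 L0 θsc s)),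
          ∀ y ∈ Sr ω ((LSc l0 L0 θsc s : ℕ) : ℝ) ∩
                boxI z (-(2*(LSc l0 L0 θsc s) : ℤ)) (2*(LSc l0 L0 θsc s)),
          connIn (SS ω ∩ boxI z (-(4*(LSc l0 L0 θsc s) : ℤ)) (4*(LSc l0 L0 θsc s))) x y)}

/-- The boundary of `A` within `g`, in the `L`-renormalized lattice: pairs of vertices of `g` at
`ℓ¹`-distance `L` with one vertex in `A` and the other in `g ∖ A`. -/
def bdWithin (L : ℕ) (g A : Set (Pt d)) : Set (Pt d × Pt d) :=
  {p | dist1 p.1 p.2 = L ∧ p.1 ∈ A ∧ p.2 ∈ g \ A}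

/-- One step of an `L`-renormalized nearest-neighbour path inside `T`. -/
def stepRelL (L : ℕ) (T : Set (Pt d)) (x y : Pt d) : Prop :=
  dist1 x y = L ∧ x ∈ T ∧ y ∈ T

/-- `x` and `y` are connected by an `L`-renormalized nearest-neighbour path inside `T`. -/
def connInL (L : ℕ) (T : Set (Pt d)) (x y : Pt d) : Prop :=
  x ∈ T ∧ y ∈ T ∧ Relation.ReflTransGen (stepRelL L T) x y

/-- The set `T` is connected as a subgraph of the `L`-renormalized lattice. -/
def IsConnL (L : ℕ) (T : Set (Pt d)) : Prop := ∀ x ∈ T, ∀ y ∈ T, connInL L T x y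

/-- The infinite product `f_j(r_0/l_0) = ∏_{i=0}^∞ (1 − 3(r_i/l_i)^j)`. -/
noncomputable def fjProd (r0 l0 θsc j : ℕ) : ℝ :=
  ∏' i : ℕ, (1 - 3 * ((rSc r0 θsc i : ℝ) / (lSc l0 θsc i)) ^ j)

/-- The affine sublattice `x₀ + ∑_{i=1}^j ℤ·e_i`. -/
def sliceSpan {j : ℕ} (x0 : Pt d) (e : Fin j → Pt d) : Set (Pt d) :=
  {y | ∃ c : Fin j → ℤ, y = x0 + ∑ i, c i • e i}

/-- The vectors `e_1,…,e_j` are pairwise orthogonal with `|e_i|₁ = 1`. -/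
def orthoUnit {j : ℕ} (e : Fin j → Pt d) : Prop :=
  (∀ i, dist1 (0 : Pt d) (e i) = 1) ∧
  Pairwise fun i i' => (∑ t, (e i t) * (e i' t)) = 0

/-- `C` is a connected component of maximal cardinality of `T`. -/
def isLargestComp (T C : Set (Pt d)) : Prop :=
  (∃ x ∈ T, C = cluster T x) ∧ ∀ y ∈ T, (cluster T y).ncard ≤ C.ncard

/-! ### Auxiliary lemmas -/

section AuxHelpers

lemma dist1_comm' (x y : Pt d) : dist1 x y = dist1 y x :=
  Finset.sum_congr rfl fun i _ => by omega

lemma distInf_le_iff' {x y : Pt d} {n : ℕ} :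
    distInf x y ≤ n ↔ ∀ i, (x i - y i).natAbs ≤ n := by
  simp [distInf, Finset.sup_le_iff]

lemma distInf_coord_le' {x y : Pt d} (i : Fin d) : (x i - y i).natAbs ≤ distInf x y := by
  rw [distInf]; exact Finset.le_sup (f := fun i => (x i - y i).natAbs) (Finset.mem_univ i)

lemma coord_le_dist1' {x y : Pt d} (i : Fin d) : (x i - y i).natAbs ≤ dist1 x y := by
  rw [dist1]
  exact Finset.single_le_sum (f := fun i => (x i - y i).natAbs)
    (fun _ _ => Nat.zero_le _) (Finset.mem_univ i)

lemma distInf_le_dist1' (x y : Pt d) : distInf x y ≤ dist1 x y := by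
  rw [distInf]; exact Finset.sup_le fun i _ => coord_le_dist1' i

lemma distInf_triangle' (x y z : Pt d) :
    distInf x z ≤ distInf x y + distInf y z := by
  rw [distInf_le_iff']
  intro i
  have h1 := distInf_coord_le' (x := x) (y := y) i
  have h2 := distInf_coord_le' (x := y) (y := z) i
  omega

lemma dist1_eq_zero_iff' {x y : Pt d} : dist1 x y = 0 ↔ x = y := by
  constructor
  · intro h
    funext i
    have := Finset.sum_eq_zero_iff.mp h i (Finset.mem_univ i)
    omega
  · rintro rfl
    exact Finset.sum_eq_zero fun i _ => by omega

lemma ballZ_subset_pi (x : Pt d) (R : ℕ) :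
    ballZ x R ⊆ ↑(Fintype.piFinset fun i => Finset.Icc (x i - R) (x i + R)) := by
  intro y hy
  simp only [Finset.mem_coe, Fintype.mem_piFinset, Finset.mem_Icc]
  intro i
  have := distInf_le_iff'.mp hy i
  omega

lemma ballZ_finite (x : Pt d) (R : ℕ) : (ballZ x R).Finite :=
  Set.Finite.subset (Finset.finite_toSet _) (ballZ_subset_pi x R)

lemma ballZ_ncard_le (x : Pt d) (R : ℕ) : (ballZ x R).ncard ≤ (2*R+1)^d := by
  have h := Set.ncard_le_ncard (ballZ_subset_pi x R) (Finset.finite_toSet _)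
  rw [Set.ncard_coe_finset, Fintype.card_piFinset] at h
  refine h.trans ?_
  have : ∀ i : Fin d, (Finset.Icc (x i - R) (x i + R)).card = 2*R+1 := by
    intro i; rw [Int.card_Icc]; omega
  rw [Finset.prod_congr rfl fun i _ => this i, Finset.prod_const]
  simp

lemma box_subset_pi (x : Pt d) (n : ℕ) :
    box x n ⊆ ↑(Fintype.piFinset fun i => Finset.Ico (x i) (x i + n)) := by
  intro y hy
  simp only [Finset.mem_coe, Fintype.mem_piFinset, Finset.mem_Ico]
  intro i
  exact hy i

lemma box_finite (x : Pt d) (n : ℕ) : (box x n).Finite :=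
  Set.Finite.subset (Finset.finite_toSet _) (box_subset_pi x n)

lemma box_ncard_le (x : Pt d) (n : ℕ) : (box x n).ncard ≤ n^d := by
  have h := Set.ncard_le_ncard (box_subset_pi x n) (Finset.finite_toSet _)
  rw [Set.ncard_coe_finset, Fintype.card_piFinset] at h
  refine h.trans ?_
  have : ∀ i : Fin d, (Finset.Ico (x i) (x i + n)).card = n := by
    intro i; rw [Int.card_Ico]; omega
  rw [Finset.prod_congr rfl fun i _ => this i, Finset.prod_const]
  simp

lemma connIn_mono' {T T' : Set (Pt d)} (h : T ⊆ T') {x y : Pt d}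
    (hc : connIn T x y) : connIn T' x y :=
  ⟨h hc.1, h hc.2.1, Relation.ReflTransGen.mono (fun _ _ hs => ⟨hs.1, h hs.2.1, h hs.2.2⟩) x y hc.2.2⟩

lemma connIn_symm' {T : Set (Pt d)} {x y : Pt d} (h : connIn T x y) : connIn T y x := by
  refine ⟨h.2.1, h.1, ?_⟩
  refine @Std.Symm.symm _ _ (@Relation.ReflTransGen.stdSymm _ (stepRel T) ⟨?_⟩) _ _ h.2.2
  intro a b hs
  exact ⟨by rw [adj, dist1_comm']; exact hs.1, hs.2.2, hs.2.1⟩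

lemma connIn_trans' {T : Set (Pt d)} {x y z : Pt d} (h1 : connIn T x y)
    (h2 : connIn T y z) : connIn T x z :=
  ⟨h1.1, h2.2.1, h1.2.2.trans h2.2.2⟩

lemma cluster_subset' (T : Set (Pt d)) (x : Pt d) : cluster T x ⊆ T :=
  fun _ hy => hy.2.1

lemma self_mem_cluster' {T : Set (Pt d)} {x : Pt d} (hx : x ∈ T) : x ∈ cluster T x :=
  ⟨hx, hx, Relation.ReflTransGen.refl⟩

lemma comp_subset' {T C : Set (Pt d)} (h : isLargestComp T C) : C ⊆ T := by
  obtain ⟨⟨w, _, rfl⟩, -⟩ := h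
  exact cluster_subset' _ _

lemma comp_connIn' {T C : Set (Pt d)} (h : isLargestComp T C) {p q : Pt d}
    (hp : p ∈ C) (hq : q ∈ C) : connIn T p q := by
  obtain ⟨⟨w, _, rfl⟩, -⟩ := h
  exact connIn_trans' (connIn_symm' hp) hq

lemma crossing' {ω : Config d} {T A : Set (Pt d)} (hT : T ⊆ SS ω) {p q : Pt d}
    (h : Relation.ReflTransGen (stepRel T) p q) (hp : p ∈ A) (hq : q ∉ A) :
    ∃ e, e ∈ edgeBd (SS ω) A ∧ e.1 ∈ T ∧ e.2 ∈ T := by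
  revert hp
  induction h using Relation.ReflTransGen.head_induction_on with
  | refl => exact fun hp => absurd hp hq
  | head hstep _ ih =>
    rename_i a c _
    intro hp
    by_cases hc : c ∈ A
    · exact ih hc
    · exact ⟨(a, c), ⟨hstep.1, hp, hT hstep.2.2, hc⟩, hstep.2.1, hstep.2.2⟩

lemma ncard_le_mul_ncard_image' {α β : Type*} {s : Set α} (hs : s.Finite) (f : α → β) (n : ℕ)
    (h : ∀ b : β, {a | a ∈ s ∧ f a = b}.ncard ≤ n) : s.ncard ≤ n * (f '' s).ncard := by
  classical
  have himg : (f '' s) = ↑(hs.toFinset.image f) := by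
    simp [Finset.coe_image, Set.Finite.coe_toFinset]
  have h2 : hs.toFinset.card ≤ n * (hs.toFinset.image f).card := by
    refine Finset.card_le_mul_card_image _ n fun b _ => ?_
    have hset : ({a | a ∈ s ∧ f a = b} : Set α) = ↑(hs.toFinset.filter fun a => f a = b) := by
      ext a; simp [Set.Finite.mem_toFinset]
    calc (hs.toFinset.filter fun a => f a = b).card
        = ({a | a ∈ s ∧ f a = b} : Set α).ncard := by rw [hset, Set.ncard_coe_finset]
      _ ≤ n := h b
  calc s.ncard = hs.toFinset.card := Set.ncard_eq_toFinset_card _ hs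
    _ ≤ n * (hs.toFinset.image f).card := h2
    _ = n * (f '' s).ncard := by rw [himg, Set.ncard_coe_finset]

end AuxHelpers

section AuxHelpers2

lemma corner_cases' {L z v : ℤ} (hL : 0 < L) (hdvd : L ∣ z) (h1 : z ≤ v) (h2 : v < z + 2*L) :
    z = L * (v / L) ∨ z = L * (v / L) - L := by
  obtain ⟨k, rfl⟩ := hdvd
  have h3 : k ≤ v / L := (Int.le_ediv_iff_mul_le hL).mpr (by linarith [mul_comm L k])
  have h4 : v / L < k + 2 := by
    rw [Int.ediv_lt_iff_lt_mul hL]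
    linarith [mul_comm (k+2) L]
  have : v / L = k ∨ v / L = k + 1 := by omega
  rcases this with h | h
  · exact Or.inl (by rw [h])
  · exact Or.inr (by rw [h]; ring)

lemma lattice_pair' {L : ℕ} (hL : 0 < L) {x y : Pt d} (hx : x ∈ lattice d L)
    (hy : y ∈ lattice d L) (hxy : dist1 x y = L) :
    ∃ i : Fin d, (x i - y i).natAbs = L ∧ ∀ j, j ≠ i → x j = y j := by
  have hdvd : ∀ j, L ∣ (x j - y j).natAbs := by
    intro j
    have : (L : ℤ) ∣ (x j - y j) := dvd_sub (hx j) (hy j)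
    simpa using Int.natAbs_dvd_natAbs.mpr this
  rw [dist1] at hxy
  have hex : ∃ i : Fin d, (x i - y i).natAbs ≠ 0 := by
    by_contra h
    push_neg at h
    rw [Finset.sum_eq_zero (fun i _ => h i)] at hxy
    omega
  obtain ⟨i, hi⟩ := hex
  have hle : (x i - y i).natAbs ≤ L := hxy ▸ coord_le_dist1' i
  have hge : L ≤ (x i - y i).natAbs := Nat.le_of_dvd (Nat.pos_of_ne_zero hi) (hdvd i)
  have heq : (x i - y i).natAbs = L := le_antisymm hle hge
  refine ⟨i, heq, fun j hj => ?_⟩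
  have hsum : ∑ k ∈ Finset.univ.erase i, (x k - y k).natAbs = 0 := by
    have h : (x i - y i).natAbs + ∑ k ∈ Finset.univ.erase i, (x k - y k).natAbs
        = ∑ k, (x k - y k).natAbs :=
      Finset.add_sum_erase Finset.univ (fun k => (x k - y k).natAbs) (Finset.mem_univ i)
    omega
  have := Finset.sum_eq_zero_iff.mp hsum j (Finset.mem_erase.mpr ⟨hj, Finset.mem_univ j⟩)
  omega

/-- one coordinate shifted by `L` -/
def addE (z : Pt d) (L : ℕ) (i : Fin d) : Pt d := fun j => z j + if j = i then (L : ℤ) else 0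

lemma pair_min' {L : ℕ} (hL : 0 < L) {x y : Pt d} (hx : x ∈ lattice d L)
    (hy : y ∈ lattice d L) (hxy : dist1 x y = L) :
    ∃ i : Fin d,
      (x = (fun j => min (x j) (y j)) ∧ y = addE (fun j => min (x j) (y j)) L i) ∨
      (y = (fun j => min (x j) (y j)) ∧ x = addE (fun j => min (x j) (y j)) L i) := by
  obtain ⟨i, hi, hoff⟩ := lattice_pair' hL hx hy hxy
  refine ⟨i, ?_⟩
  rcases le_or_gt (x i) (y i) with hc | hc
  · left
    constructor
    · funext j
      by_cases hj : j = i
      · subst hj; omega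
      · rw [hoff j hj]; omega
    · funext j
      simp only [addE]
      by_cases hj : j = i
      · subst hj; simp <;> omega
      · have := hoff j hj
        simp [hj] <;> omega
  · right
    constructor
    · funext j
      by_cases hj : j = i
      · subst hj; omega
      · rw [hoff j hj]; omega
    · funext j
      simp only [addE]
      by_cases hj : j = i
      · subst hj; simp <;> omega
      · have := hoff j hj
        simp [hj] <;> omega

lemma subCorner_false' (z : Pt d) (L : ℕ) : subCorner z L (fun _ => false) = z := by
  funext j; simp [subCorner]

lemma subCorner_single' (z : Pt d) (L : ℕ) (i : Fin d) :
    subCorner z L (fun j => decide (j = i)) = addE z L i := by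
  funext j
  simp only [subCorner, addE, decide_eq_true_eq]

lemma lSc_pos (l0 θsc k : ℕ) (hl : 0 < l0) : 0 < lSc l0 θsc k :=
  Nat.mul_pos hl (Nat.pow_pos (by norm_num : 0 < 4))

lemma LSc_pos (l0 L0 θsc : ℕ) (hl : 0 < l0) (hL : 0 < L0) (s : ℕ) :
    0 < LSc l0 L0 θsc s := by
  induction s with
  | zero => exact hL
  | succ k ih => exact Nat.mul_pos (lSc_pos l0 θsc k hl) ih

lemma le_LSc (l0 L0 θsc : ℕ) (hl : 0 < l0) (hL : 0 < L0) (s : ℕ) :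
    L0 ≤ LSc l0 L0 θsc s := by
  induction s with
  | zero => exact le_refl _
  | succ k ih =>
    calc L0 ≤ LSc l0 L0 θsc k := ih
      _ ≤ lSc l0 θsc k * LSc l0 L0 θsc k :=
          Nat.le_mul_of_pos_left _ (lSc_pos l0 θsc k hl)

lemma prod_one_sub_ge (s : Finset ℕ) (a : ℕ → ℝ) (h0 : ∀ i, 0 ≤ a i) (h1 : ∀ i, a i ≤ 1) :
    1 - ∑ i ∈ s, a i ≤ ∏ i ∈ s, (1 - a i) := by
  classical
  induction s using Finset.induction with
  | empty => simp
  | @insert j t hni ih =>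
    rw [Finset.sum_insert hni, Finset.prod_insert hni]
    have hs0 : 0 ≤ ∑ i ∈ t, a i := Finset.sum_nonneg fun i _ => h0 i
    nlinarith [h0 j, h1 j, ih]

lemma fjProd_ge58 (r0 l0 θsc j : ℕ) (hr : 0 < r0) (hl : 4*r0 < l0) (hθ : 1 ≤ θsc)
    (hj : 2 ≤ j) : (5/8 : ℝ) ≤ fjProd r0 l0 θsc j := by
  have hl0 : (0:ℝ) < l0 := by exact_mod_cast (show 0 < l0 by omega)
  set a : ℕ → ℝ := fun i => 3 * ((rSc r0 θsc i : ℝ) / (lSc l0 θsc i)) ^ j with ha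
  have hratio : ∀ i : ℕ, (0:ℝ) ≤ (rSc r0 θsc i : ℝ) / (lSc l0 θsc i) ∧
      (rSc r0 θsc i : ℝ) / (lSc l0 θsc i) ≤ (1/4) * (1/2)^i := by
    intro i
    have hlpos : (0:ℝ) < (lSc l0 θsc i : ℝ) := by
      exact_mod_cast lSc_pos l0 θsc i (by omega)
    refine ⟨by positivity, ?_⟩
    have h4 : (4:ℝ) ^ (i ^ θsc) = 2 ^ (i ^ θsc) * 2 ^ (i ^ θsc) := by
      rw [← mul_pow]; norm_num
    have key : (rSc r0 θsc i : ℝ) / (lSc l0 θsc i)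
        = ((r0:ℝ)/(l0:ℝ)) * ((1:ℝ)/2) ^ (i ^ θsc) := by
      rw [rSc, lSc]
      push_cast
      rw [div_pow, one_pow, h4]
      have h2 : ((2:ℝ) ^ (i ^ θsc)) ≠ 0 := by positivity
      field_simp
    rw [key]
    have hii : i ≤ i ^ θsc := by
      rcases Nat.eq_zero_or_pos i with h | h
      · subst h; simp
      · calc i = i ^ 1 := (pow_one i).symm
          _ ≤ i ^ θsc := Nat.pow_le_pow_right h hθ
    have hrr : (r0:ℝ)/(l0:ℝ) ≤ 1/4 := by
      rw [div_le_div_iff₀ hl0 (by norm_num)]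
      have : (4*r0 : ℝ) ≤ l0 := by exact_mod_cast Nat.le_of_lt hl
      linarith
    have hp : ((1:ℝ)/2)^(i^θsc) ≤ (1/2)^i :=
      pow_le_pow_of_le_one (by norm_num) (by norm_num) hii
    have h0 : (0:ℝ) ≤ (1/2:ℝ)^(i^θsc) := by positivity
    nlinarith [pow_nonneg (show (0:ℝ) ≤ 1/2 by norm_num) i]
  have ha0 : ∀ i, 0 ≤ a i := by
    intro i; rw [ha]
    have := (hratio i).1
    positivity
  have haup : ∀ i : ℕ, a i ≤ (3/16) * (1/2)^i := by
    intro i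
    have h1 := (hratio i).1
    have h2 := (hratio i).2
    have hq1 : ((1:ℝ)/4) * (1/2)^i ≤ 1 := by
      have : ((1:ℝ)/2)^i ≤ 1 := pow_le_one₀ (by norm_num) (by norm_num)
      nlinarith
    have h3 : ((rSc r0 θsc i : ℝ) / (lSc l0 θsc i)) ^ j ≤ ((1/4) * (1/2)^i) ^ j :=
      pow_le_pow_left₀ h1 h2 j
    have h4 : ((1/4:ℝ) * (1/2)^i) ^ j ≤ ((1/4) * (1/2)^i) ^ 2 :=
      pow_le_pow_of_le_one (by positivity) hq1 hj
    have h5 : ((1/4:ℝ) * (1/2)^i) ^ 2 ≤ (1/16) * (1/2)^i := by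
      have : ((1:ℝ)/2)^i ≤ 1 := pow_le_one₀ (by norm_num) (by norm_num)
      have h0 : (0:ℝ) ≤ (1/2:ℝ)^i := by positivity
      nlinarith
    rw [ha]
    nlinarith
  have ha1 : ∀ i, a i ≤ 1 := by
    intro i
    refine (haup i).trans ?_
    have : ((1:ℝ)/2)^i ≤ 1 := pow_le_one₀ (by norm_num) (by norm_num)
    nlinarith
  have hprodlb : ∀ s : Finset ℕ, (5/8 : ℝ) ≤ ∏ i ∈ s, (1 - a i) := by
    intro s
    have hsum : ∑ i ∈ s, a i ≤ 3/8 := by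
      calc ∑ i ∈ s, a i ≤ ∑ i ∈ s, (3/16) * (1/2:ℝ)^i := Finset.sum_le_sum fun i _ => haup i
        _ = (3/16) * ∑ i ∈ s, (1/2:ℝ)^i := by rw [Finset.mul_sum]
        _ ≤ (3/16) * 2 := by
            have hs2 : ∑ i ∈ s, (1/2:ℝ)^i ≤ ∑' i : ℕ, (1/2:ℝ)^i :=
              Summable.sum_le_tsum s (fun i _ => by positivity)
                (summable_geometric_of_lt_one (by norm_num) (by norm_num))
            rw [tsum_geometric_of_lt_one (by norm_num) (by norm_num)] at hs2
            norm_num at hs2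
            linarith
        _ = 3/8 := by norm_num
    have := prod_one_sub_ge s a ha0 ha1
    linarith
  rw [fjProd]
  by_cases hm : Multipliable fun i : ℕ => 1 - a i
  · exact ge_of_tendsto' hm.hasProd hprodlb
  · rw [tprod_eq_one_of_not_multipliable hm]; norm_num

end AuxHelpers2
section AuxHelpers3

/-- The `L`-lattice point whose box contains `x`. -/
def latPt (L : ℕ) (x : Pt d) : Pt d := fun j => (L : ℤ) * (x j / L)

lemma latPt_mem_lattice (L : ℕ) (x : Pt d) : latPt L x ∈ lattice d L :=
  fun _ => Dvd.intro _ rfl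

lemma zero_mem_lattice (L : ℕ) : (0 : Pt d) ∈ lattice d L := fun _ => dvd_zero _

lemma distInf_self_zero (x : Pt d) {n : ℕ} : distInf x x ≤ n := by
  rw [distInf_le_iff']; intro i; omega

lemma mem_box_latPt {L : ℕ} (hL : 0 < L) (x : Pt d) : x ∈ box (latPt L x) L := by
  intro i
  have h := Int.mul_ediv_add_emod (x i) (L : ℤ)
  have h1 : 0 ≤ x i % L := Int.emod_nonneg _ (by exact_mod_cast hL.ne')
  have h2 : x i % L < L := Int.emod_lt_of_pos _ (by exact_mod_cast hL)
  simp only [latPt]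
  constructor <;> linarith

lemma latPt_eq_of_mem_box {L : ℕ} (hL : 0 < L) {xs z : Pt d} (hxs : xs ∈ lattice d L)
    (hz : z ∈ box xs L) : latPt L z = xs := by
  funext i
  obtain ⟨k, hk⟩ := hxs i
  have h1 := (hz i).1
  have h2 := (hz i).2
  rw [hk] at h1 h2
  have hLZ : (0:ℤ) < L := by exact_mod_cast hL
  have hdiv : z i / L = k := by
    have hzi : z i = (z i - L * k) + k * L := by ring
    rw [hzi, Int.add_mul_ediv_right _ _ hLZ.ne']
    have h0 : (z i - L * k) / L = 0 := Int.ediv_eq_zero_of_lt (by linarith) (by linarith)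
    rw [h0]; ring
  simp only [latPt, hdiv, hk]

lemma count_image_le {α β : Type*} (s : Set α) (hs : s.Finite) (t : Set β) (ht : t.Finite)
    (n : ℕ) (F : α → β) (hF : ∀ a ∈ s, F a ∈ t)
    (hfib : ∀ b : β, {a | a ∈ s ∧ F a = b}.ncard ≤ n) : s.ncard ≤ n * t.ncard := by
  calc s.ncard ≤ n * (F '' s).ncard := ncard_le_mul_ncard_image' hs F n hfib
    _ ≤ n * t.ncard :=
        mul_le_mul_right (Set.ncard_le_ncard (Set.image_subset_iff.mpr hF) ht) n

lemma sum_boxes_le_ncard {Ls : ℕ} (hLs : 0 < Ls) (X : Set (Pt d)) (hX : X.Finite)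
    (hXlat : X ⊆ lattice d Ls) (M : Set (Pt d)) (hM : M.Finite) (G : Set (Pt d))
    (hGfin : G.Finite)
    (hsub : ∀ xs ∈ X, G ∩ box xs Ls ⊆ M) (c : ℝ)
    (hlb : ∀ xs ∈ X, c ≤ (G ∩ box xs Ls).ncard) :
    (X.ncard : ℝ) * c ≤ M.ncard := by
  classical
  set XF := hX.toFinset with hXF
  set t : Pt d → Finset (Pt d) := fun xs => (hGfin.inter_of_left (box xs Ls)).toFinset with htdef
  have hdisj : ∀ xs ∈ XF, ∀ xs' ∈ XF, xs ≠ xs' → Disjoint (t xs) (t xs') := by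
    intro xs hxs xs' hxs' hne
    rw [Finset.disjoint_left]
    intro z hz hz'
    rw [htdef, Set.Finite.mem_toFinset] at hz hz'
    apply hne
    rw [← latPt_eq_of_mem_box hLs (hXlat (hX.mem_toFinset.mp hxs)) hz.2,
      ← latPt_eq_of_mem_box hLs (hXlat (hX.mem_toFinset.mp hxs')) hz'.2]
  have hcard : (XF.biUnion t).card = ∑ xs ∈ XF, (t xs).card := Finset.card_biUnion hdisj
  have hsub2 : XF.biUnion t ⊆ hM.toFinset := by
    intro z hz
    rw [Finset.mem_biUnion] at hz
    obtain ⟨xs, hxs, hzt⟩ := hz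
    rw [htdef, Set.Finite.mem_toFinset] at hzt
    rw [Set.Finite.mem_toFinset]
    exact hsub xs (hX.mem_toFinset.mp hxs) hzt
  have hle : ∑ xs ∈ XF, (t xs).card ≤ M.ncard := by
    rw [← hcard, Set.ncard_eq_toFinset_card _ hM]
    exact Finset.card_le_card hsub2
  have hstep : (X.ncard : ℝ) * c ≤ ∑ xs ∈ XF, ((t xs).card : ℝ) := by
    have h1 : ∀ xs ∈ XF, c ≤ ((t xs).card : ℝ) := by
      intro xs hxs
      have := hlb xs (hX.mem_toFinset.mp hxs)
      rwa [Set.ncard_eq_toFinset_card _ (hGfin.inter_of_left (box xs Ls))] at this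
    calc (X.ncard : ℝ) * c = ∑ _xs ∈ XF, c := by
          rw [Finset.sum_const, nsmul_eq_mul, Set.ncard_eq_toFinset_card _ hX, mul_comm]
      _ ≤ ∑ xs ∈ XF, ((t xs).card : ℝ) := Finset.sum_le_sum h1
  refine hstep.trans ?_
  calc ∑ xs ∈ XF, ((t xs).card : ℝ) = ((∑ xs ∈ XF, (t xs).card : ℕ) : ℝ) := by push_cast; ring
    _ ≤ M.ncard := by exact_mod_cast hle

end AuxHelpers3

section AuxHelpers4

lemma bigComp_nonempty {ω : Config d} {η : ℝ} {L0 : ℕ} {B C : Set (Pt d)}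
    (h : bigCompIn ω η L0 B C) : C.Nonempty := by
  obtain ⟨⟨w, hw, rfl⟩, -⟩ := h
  exact ⟨w, self_mem_cluster' hw⟩

lemma bigComp_subset {ω : Config d} {η : ℝ} {L0 : ℕ} {B C : Set (Pt d)}
    (h : bigCompIn ω η L0 B C) : C ⊆ Sr ω (L0 : ℝ) ∩ B := by
  obtain ⟨⟨w, hw, rfl⟩, -⟩ := h
  exact cluster_subset' _ _

lemma exists_edge_1a {ω : Config d} {η : ℝ} {L0 : ℕ} (hL0 : 0 < L0)
    (G A : Set (Pt d)) (hGlat : G ⊆ lattice d L0)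
    (hGA : ∀ z ∈ G, ω ∈ eventA d η L0 z)
    (p : Pt d × Pt d)
    (hp : p ∈ bdWithin L0 G {x ∈ G | ∃ Cx : Set (Pt d),
        bigCompIn ω η L0 (box x L0) Cx ∧ (Cx ∩ A).Nonempty}) :
    ∃ e, e ∈ edgeBd (SS ω) A ∧ e.1 ∈ box (fun j => min (p.1 j) (p.2 j)) (2*L0) := by
  classical
  obtain ⟨x, y⟩ := p
  obtain ⟨hdist, hxMA, hyGdiff⟩ := hp
  simp only at hdist hxMA hyGdiff ⊢
  have hyG : y ∈ G := hyGdiff.1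
  have hyMA : y ∉ {x ∈ G | ∃ Cx : Set (Pt d),
      bigCompIn ω η L0 (box x L0) Cx ∧ (Cx ∩ A).Nonempty} := hyGdiff.2
  have hxG : x ∈ G := hxMA.1
  obtain ⟨i, hcase⟩ := pair_min' hL0 (hGlat hxG) (hGlat hyG) hdist
  set z : Pt d := fun j => min (x j) (y j) with hzdef
  -- components
  obtain ⟨-, Cx, hCxbig, q₀, hq₀Cx, hq₀A⟩ := hxMA
  obtain ⟨Cy, hCybig⟩ := (hGA y hyG).1 (fun _ => false)
  rw [subCorner_false'] at hCybig
  obtain ⟨w, hw, hCyeq⟩ := hCybig.1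
  have hwCy : w ∈ Cy := hCyeq ▸ self_mem_cluster' hw
  have hwA : w ∉ A := by
    intro hwA
    exact hyMA ⟨hyG, Cy, ⟨⟨w, hw, hCyeq⟩, hCybig.2⟩, ⟨w, hwCy, hwA⟩⟩
  -- connect
  have hconn : connIn (SS ω ∩ box z (2*L0)) q₀ w := by
    rcases hcase with ⟨hxz, hyz⟩ | ⟨hyz, hxz⟩
    · have hzG : z ∈ G := hxz ▸ hxG
      have hCx' : bigCompIn ω η L0 (box (subCorner z L0 (fun _ => false)) L0) Cx := by
        rw [subCorner_false', ← hxz]; exact hCxbig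
      have hCy' : bigCompIn ω η L0 (box (subCorner z L0 (fun j => decide (j = i))) L0) Cy := by
        rw [subCorner_single', ← hyz]; exact ⟨⟨w, hw, hCyeq⟩, hCybig.2⟩
      exact (hGA z hzG).2 _ _ Cx Cy q₀ w hCx' hCy' hq₀Cx hwCy
    · have hzG : z ∈ G := hyz ▸ hyG
      have hCx' : bigCompIn ω η L0 (box (subCorner z L0 (fun j => decide (j = i))) L0) Cx := by
        rw [subCorner_single', ← hxz]; exact hCxbig
      have hCy' : bigCompIn ω η L0 (box (subCorner z L0 (fun _ => false)) L0) Cy := by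
        rw [subCorner_false', ← hyz]; exact ⟨⟨w, hw, hCyeq⟩, hCybig.2⟩
      exact (hGA z hzG).2 _ _ Cx Cy q₀ w hCx' hCy' hq₀Cx hwCy
  obtain ⟨e, he, he1, -⟩ :=
    crossing' (Set.inter_subset_left) hconn.2.2 hq₀A hwA
  exact ⟨e, he, he1.2⟩

lemma fiber_bound_1a (hd : 0 < d) {L0 : ℕ} (hL0 : 0 < L0) (G MA : Set (Pt d))
    (hGlat : G ⊆ lattice d L0) (hMAG : MA ⊆ G) (F : Pt d × Pt d → Pt d × Pt d)
    (hbox : ∀ p ∈ bdWithin L0 G MA, (F p).1 ∈ box (fun j => min (p.1 j) (p.2 j)) (2*L0)) :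
    ∀ e : Pt d × Pt d, {p | p ∈ bdWithin L0 G MA ∧ F p = e}.ncard ≤ d * 2^d := by
  classical
  intro e
  have hPair : ∀ p : Pt d × Pt d, p ∈ bdWithin L0 G MA → ∃ i : Fin d,
      (p.1 = (fun j => min (p.1 j) (p.2 j)) ∧
        p.2 = addE (fun j => min (p.1 j) (p.2 j)) L0 i) ∨
      (p.2 = (fun j => min (p.1 j) (p.2 j)) ∧
        p.1 = addE (fun j => min (p.1 j) (p.2 j)) L0 i) := by
    intro p hp
    exact pair_min' hL0 (hGlat (hMAG hp.2.1)) (hGlat hp.2.2.1) hp.1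
  have : Nonempty (Fin d) := ⟨⟨0, hd⟩⟩
  choose! I hI using hPair
  set ψ : Pt d × Pt d → (Fin d → Bool) × Fin d :=
    fun p => (fun j => decide (min (p.1 j) (p.2 j) = (L0:ℤ) * (e.1 j / L0)), I p) with hψdef
  have key : {p | p ∈ bdWithin L0 G MA ∧ F p = e}.ncard ≤
      (Set.univ : Set ((Fin d → Bool) × Fin d)).ncard := by
    refine Set.ncard_le_ncard_of_injOn ψ (fun a _ => Set.mem_univ _) ?_ Set.finite_univ
    intro p hp q hq hψ
    obtain ⟨hpB, hpF⟩ := hp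
    obtain ⟨hqB, hqF⟩ := hq
    have hvp : e.1 ∈ box (fun j => min (p.1 j) (p.2 j)) (2*L0) := hpF ▸ hbox p hpB
    have hvq : e.1 ∈ box (fun j => min (q.1 j) (q.2 j)) (2*L0) := hqF ▸ hbox q hqB
    have hdvd : ∀ (r : Pt d × Pt d), r ∈ bdWithin L0 G MA →
        ∀ j, (L0:ℤ) ∣ min (r.1 j) (r.2 j) := by
      intro r hr j
      rcases le_total (r.1 j) (r.2 j) with h | h
      · rw [min_eq_left h]; exact hGlat (hMAG hr.2.1) j
      · rw [min_eq_right h]; exact hGlat hr.2.2.1 j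
    have hzeq : (fun j => min (p.1 j) (p.2 j)) = (fun j => min (q.1 j) (q.2 j)) := by
      funext j
      have hbp : decide (min (p.1 j) (p.2 j) = (L0:ℤ) * (e.1 j / L0))
          = decide (min (q.1 j) (q.2 j) = (L0:ℤ) * (e.1 j / L0)) :=
        congrFun (congrArg Prod.fst hψ) j
      have hcp := corner_cases' (by exact_mod_cast hL0) (hdvd p hpB j)
        (hvp j).1 (by have := (hvp j).2; push_cast at this ⊢; linarith)
      have hcq := corner_cases' (by exact_mod_cast hL0) (hdvd q hqB j)
        (hvq j).1 (by have := (hvq j).2; push_cast at this ⊢; linarith)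
      have hL0Z : (0:ℤ) < L0 := by exact_mod_cast hL0
      rcases hcp with h1 | h1 <;> rcases hcq with h2 | h2
      · rw [h1, h2]
      · exfalso
        rw [decide_eq_decide] at hbp
        have := hbp.mp h1
        omega
      · exfalso
        rw [decide_eq_decide] at hbp
        have := hbp.mpr h2
        omega
      · rw [h1, h2]
    have hieq : I p = I q := congrArg Prod.snd hψ
    have hip := hI p hpB
    have hiq := hI q hqB
    rw [hzeq, hieq] at hip
    rcases hip with ⟨hp1, hp2⟩ | ⟨hp1, hp2⟩ <;> rcases hiq with ⟨hq1, hq2⟩ | ⟨hq1, hq2⟩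
    · exact Prod.ext_iff.mpr ⟨hp1.trans hq1.symm, hp2.trans hq2.symm⟩
    · exfalso
      have h1 : p.1 ∈ MA := hpB.2.1
      have h2 : q.2 ∉ MA := hqB.2.2.2
      rw [hp1] at h1
      rw [hq1] at h2
      exact h2 h1
    · exfalso
      have h1 : q.1 ∈ MA := hqB.2.1
      have h2 : p.2 ∉ MA := hpB.2.2.2
      rw [hq1] at h1
      rw [hp1] at h2
      exact h2 h1
    · exact Prod.ext_iff.mpr ⟨hp2.trans hq2.symm, hp1.trans hq1.symm⟩
  rw [Set.ncard_univ, Nat.card_eq_fintype_card] at key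
  simpa [Fintype.card_fun, mul_comm] using key

end AuxHelpers4

/-- Lemma 3.2. In the setting of the isoperimetry proof, for `A ⊆ C_R`, with
`M_A = {x ∈ 𝐆 : C_x ∩ A ≠ ∅}` and `D_A = {x ∈ A : ∃ y ∈ C_{2R}∖A, |x−y|_∞ ≤ 2L_s}`:
`|∂_S A| ≥ max{(d·2^d)⁻¹·|∂_𝐆 M_A|, |D_A|/(11L_s)^d}`, and there is `ρ > 0` such that if
`r_0/l_0 < ρ` then `|A| ≤ 6^d·L_0^d·|M_A| + |D_A|`. -/
theorem stmt9 (d : ℕ) (hd : 2 ≤ d) (a b : ℝ) (ha : 0 ≤ a) (hab : a < b)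
    (P : ℝ → Measure (Config d)) (Ax : Axioms d a b P)
    (u : ℝ) (hu : u ∈ Set.Ioo a b)
    (θiso : ℝ) (hθiso : θiso ∈ Set.Ioo (0:ℝ) 1) :
    ∃ ρ > (0:ℝ),
      ∀ (l0 r0 L0 : ℕ), 0 < r0 → 4*r0 < l0 → 0 < L0 →
      (1 - 1/(L0:ℝ)) ^ (-(d:ℝ)) * (fjProd r0 l0 ⌈1/Ax.εP⌉₊ d)⁻¹ - 1 < eta d (P u) / 4 →
      ∀ R : ℕ, (L0 : ℝ) ^ ((3*(d:ℝ)^2)/θiso) ≤ (R : ℝ) →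
      ∀ s r : ℕ, isScaleS d l0 L0 ⌈1/Ax.εP⌉₊ θiso R s → r = s/2 →
      ∀ ω : Config d, ω ∈ eventH d (eta d (P u)) r0 l0 L0 ⌈1/Ax.εP⌉₊ s r R →
      ∀ G : Set (Pt d),
        G ⊆ lattice d L0 ∩ ballZ (0 : Pt d) (2*R - LSc l0 L0 ⌈1/Ax.εP⌉₊ s) →
        (∀ z ∈ G, ω ∈ eventA d (eta d (P u)) L0 z ∧ ω ∈ eventB d (eta d (P u)) L0 z) →
        (∀ xs ∈ lattice d (LSc l0 L0 ⌈1/Ax.εP⌉₊ s) ∩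
            ballZ (0 : Pt d) (2*R - 2*LSc l0 L0 ⌈1/Ax.εP⌉₊ s),
          IsConnL L0 (G ∩ box xs (LSc l0 L0 ⌈1/Ax.εP⌉₊ s)) ∧
          ((LSc l0 L0 ⌈1/Ax.εP⌉₊ s : ℝ)/(L0 : ℝ)) ^ d * fjProd r0 l0 ⌈1/Ax.εP⌉₊ d ≤
            (G ∩ box xs (LSc l0 L0 ⌈1/Ax.εP⌉₊ s)).ncard) →
      ∀ CR C2R : Set (Pt d),
        isLargestComp (SS ω ∩ ballZ (0 : Pt d) R) CR →
        isLargestComp (SS ω ∩ ballZ (0 : Pt d) (2*R)) C2R →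
        CR ⊆ C2R →
        (∀ x ∈ G, ∀ Cx : Set (Pt d),
          bigCompIn ω (eta d (P u)) L0 (box x L0) Cx → Cx ⊆ C2R) →
      ∀ A : Set (Pt d), A ⊆ CR →
        -- the boundary bound (3.9)
        (((1:ℝ)/(d * 2^d)) *
            (bdWithin L0 G {x ∈ G | ∃ Cx : Set (Pt d),
              bigCompIn ω (eta d (P u)) L0 (box x L0) Cx ∧ (Cx ∩ A).Nonempty}).ncard ≤
          (edgeBd (SS ω) A).ncard ∧
         ({x ∈ A | ∃ y ∈ C2R \ A,
              distInf x y ≤ 2 * LSc l0 L0 ⌈1/Ax.εP⌉₊ s}.ncard : ℝ) /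
            (11 * (LSc l0 L0 ⌈1/Ax.εP⌉₊ s : ℝ)) ^ d ≤
          (edgeBd (SS ω) A).ncard) ∧
        -- the volume bound (3.10), provided r₀/l₀ < ρ
        ((r0 : ℝ)/(l0 : ℝ) < ρ →
          (A.ncard : ℝ) ≤
            6 ^ d * (L0 : ℝ) ^ d *
              ({x ∈ G | ∃ Cx : Set (Pt d),
                bigCompIn ω (eta d (P u)) L0 (box x L0) Cx ∧ (Cx ∩ A).Nonempty}.ncard : ℝ) +
            ({x ∈ A | ∃ y ∈ C2R \ A,
                distInf x y ≤ 2 * LSc l0 L0 ⌈1/Ax.εP⌉₊ s}.ncard : ℝ)) := by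
  classical
  refine ⟨1, one_pos, ?_⟩
  intro l0 r0 L0 hr0 hrl hL0 _hfj R hRlb s r hsS _hrs ω hω G hG1 hG2 hG3
    CR C2R hCR hC2R hCRsub hCsub A hA
  set θ := ⌈1/Ax.εP⌉₊ with hθdef
  set η := eta d (P u) with hηdef
  set Ls := LSc l0 L0 θ s with hLsdef
  set F := fjProd r0 l0 θ d with hFdef
  set MA := {x ∈ G | ∃ Cx : Set (Pt d),
      bigCompIn ω η L0 (box x L0) Cx ∧ (Cx ∩ A).Nonempty} with hMAdef
  set DA := {x ∈ A | ∃ y ∈ C2R \ A, distInf x y ≤ 2 * Ls} with hDAdef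
  set E := edgeBd (SS ω) A with hEdef
  -- basic facts
  have hd0 : 0 < d := by omega
  have hθ1 : 1 ≤ θ := by
    rw [hθdef, Nat.one_le_ceil_iff]
    exact div_pos one_pos Ax.εP_pos
  have hl0pos : 0 < l0 := by omega
  have hLspos : 0 < Ls := LSc_pos l0 L0 θ hl0pos hL0 s
  have hL0Ls : L0 ≤ Ls := le_LSc l0 L0 θ hl0pos hL0 s
  have hR1 : 1 ≤ R := by
    have h1 : (1:ℝ) ≤ (L0:ℝ) ^ ((3*(d:ℝ)^2)/θiso) := by
      apply Real.one_le_rpow (by exact_mod_cast hL0)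
      exact div_nonneg (by positivity) hθiso.1.le
    have : (1:ℝ) ≤ (R:ℝ) := h1.trans hRlb
    exact_mod_cast this
  have hLs12R : Ls^12 ≤ R := by
    have hscale := hsS.1
    have hRR : (1:ℝ) ≤ (R:ℝ) := by exact_mod_cast hR1
    have hRθ : (R:ℝ)^θiso ≤ (R:ℝ) := by
      calc (R:ℝ)^θiso ≤ (R:ℝ)^(1:ℝ) :=
            Real.rpow_le_rpow_of_exponent_le hRR hθiso.2.le
        _ = R := Real.rpow_one _
    have hLs1R : (1:ℝ) ≤ (Ls:ℝ) := by exact_mod_cast hLspos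
    have h12 : ((Ls:ℝ))^(12:ℕ) ≤ ((Ls:ℝ))^(3*d^2) :=
      pow_le_pow_right₀ hLs1R (by nlinarith)
    have : ((Ls:ℝ))^(12:ℕ) ≤ (R:ℝ) := h12.trans (hscale.trans hRθ)
    exact_mod_cast this
  have hF58 : (5/8 : ℝ) ≤ F := fjProd_ge58 r0 l0 θ d hr0 hrl hθ1 hd
  have hFpos : (0:ℝ) < F := lt_of_lt_of_le (by norm_num) hF58
  -- finiteness
  have hCRfin : CR.Finite := (ballZ_finite (0 : Pt d) R).subset
    (fun x hx => (comp_subset' hCR hx).2)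
  have hC2Rfin : C2R.Finite := (ballZ_finite (0 : Pt d) (2*R)).subset
    (fun x hx => (comp_subset' hC2R hx).2)
  have hAfin : A.Finite := hCRfin.subset hA
  have hABall : A ⊆ ballZ (0 : Pt d) R := fun x hx => (comp_subset' hCR (hA hx)).2
  have hGfin : G.Finite := (ballZ_finite (0 : Pt d) _).subset (fun x hx => (hG1 hx).2)
  have hGlat : G ⊆ lattice d L0 := fun x hx => (hG1 hx).1
  have hMAG : MA ⊆ G := fun x hx => hx.1
  have hMAfin : MA.Finite := hGfin.subset hMAG
  have hDAfin : DA.Finite := hAfin.subset (fun x hx => hx.1)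
  have hDAA : DA ⊆ A := fun x hx => hx.1
  have hEfin : E.Finite := by
    apply ((ballZ_finite (0 : Pt d) (R+1)).prod (ballZ_finite (0 : Pt d) (R+1))).subset
    rintro ⟨v, w⟩ ⟨hadj, hvA, hwS⟩
    have hv : distInf (0 : Pt d) v ≤ R := hABall hvA
    constructor
    · exact le_trans hv (by omega)
    · calc distInf (0 : Pt d) w ≤ distInf (0 : Pt d) v + distInf v w := distInf_triangle' _ _ _
        _ ≤ R + dist1 v w := by
            have := distInf_le_dist1' v w
            omega
        _ = R + 1 := by rw [hadj]
  have hBdfin : (bdWithin L0 G MA).Finite := by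
    apply (hGfin.prod hGfin).subset
    rintro ⟨v, w⟩ ⟨-, hv, hw⟩
    exact ⟨hMAG hv, hw.1⟩
  have hGA : ∀ z ∈ G, ω ∈ eventA d η L0 z := fun z hz => (hG2 z hz).1
  -- Part 1a
  have hmain1 : ∀ p ∈ bdWithin L0 G MA,
      ∃ e, e ∈ E ∧ e.1 ∈ box (fun j => min (p.1 j) (p.2 j)) (2*L0) := by
    intro p hp
    exact exists_edge_1a hL0 G A hGlat hGA p hp
  choose! F1 hF1 using hmain1
  have h1a : (bdWithin L0 G MA).ncard ≤ d * 2^d * E.ncard :=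
    count_image_le _ hBdfin E hEfin _ F1 (fun p hp => (hF1 p hp).1)
      (fiber_bound_1a hd0 hL0 G MA hGlat hMAG F1 (fun p hp => (hF1 p hp).2))
  -- Part 1b
  have hclusterC2R : ∀ v ∈ C2R, C2R ⊆ cluster (SS ω) v := by
    intro v hv p hp
    exact connIn_mono' Set.inter_subset_left (comp_connIn' hC2R hv hp)
  have hdiam : 2 ≤ Ls → ∃ u w, u ∈ C2R ∧ w ∈ C2R ∧ (Ls:ℝ) ≤ (dist1 u w : ℝ) := by
    intro hLs2
    have h5Ls : 5 * Ls ≤ R := by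
      have h11 : 2^11 ≤ Ls^11 := Nat.pow_le_pow_left hLs2 11
      have h13 : 5*Ls ≤ Ls^12 := by
        calc 5*Ls ≤ 2^11*Ls := by omega
          _ ≤ Ls^11*Ls := Nat.mul_le_mul_right _ h11
          _ = Ls^12 := by ring
      omega
    set i0 : Fin d := ⟨0, hd0⟩ with hi0
    set xs2 : Pt d := fun j => if j = i0 then (3*(Ls:ℤ)) else 0 with hxs2
    have hxs2lat : xs2 ∈ lattice d Ls := by
      intro j
      rw [hxs2]
      by_cases hj : j = i0
      · simp [hj]
      · simp [hj]
    have hxs2ball : xs2 ∈ ballZ (0 : Pt d) (2*R - 2*Ls) := by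
      rw [ballZ, Set.mem_setOf_eq, distInf_le_iff']
      intro j
      simp only [Pi.zero_apply]
      rw [hxs2]
      by_cases hj : j = i0 <;> simp [hj] <;> omega
    have h0ball : (0 : Pt d) ∈ ballZ (0 : Pt d) (2*R - 2*Ls) := distInf_self_zero _
    have hnonempty : ∀ xs ∈ lattice d Ls ∩ ballZ (0 : Pt d) (2*R - 2*Ls),
        (G ∩ box xs Ls).Nonempty := by
      intro xs hxs
      have hlb := (hG3 xs hxs).2
      have hkpos : (0:ℝ) < ((Ls:ℝ)/(L0:ℝ))^d * F := by
        apply mul_pos _ hFpos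
        apply pow_pos
        apply div_pos <;> [exact_mod_cast hLspos; exact_mod_cast hL0]
      rw [Set.nonempty_iff_ne_empty]
      intro hempty
      rw [hempty] at hlb
      simp at hlb
      linarith
    obtain ⟨z1, hz1G, hz1box⟩ := hnonempty 0 ⟨zero_mem_lattice Ls, h0ball⟩
    obtain ⟨z2, hz2G, hz2box⟩ := hnonempty xs2 ⟨hxs2lat, hxs2ball⟩
    obtain ⟨C1, hC1⟩ := (hGA z1 hz1G).1 (fun _ => false)
    rw [subCorner_false'] at hC1
    obtain ⟨C2, hC2⟩ := (hGA z2 hz2G).1 (fun _ => false)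
    rw [subCorner_false'] at hC2
    obtain ⟨uu, huu⟩ := bigComp_nonempty hC1
    obtain ⟨ww, hww⟩ := bigComp_nonempty hC2
    refine ⟨uu, ww, hCsub z1 hz1G C1 hC1 huu, hCsub z2 hz2G C2 hC2 hww, ?_⟩
    have huubox : uu ∈ box z1 L0 := (bigComp_subset hC1 huu).2
    have hwwbox : ww ∈ box z2 L0 := (bigComp_subset hC2 hww).2
    have h1 := (hz1box i0).1
    have h2 := (hz1box i0).2
    have h3 := (huubox i0).1
    have h4 := (huubox i0).2
    have h5 := (hz2box i0).1
    have h6 := (hwwbox i0).1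
    have hxs2i0 : xs2 i0 = 3*(Ls:ℤ) := by rw [hxs2]; simp
    rw [hxs2i0] at h5
    simp only [Pi.zero_apply] at h1 h2
    have hnat : Ls ≤ dist1 uu ww := by
      refine le_trans ?_ (coord_le_dist1' i0)
      have hcast : (L0:ℤ) ≤ (Ls:ℤ) := by exact_mod_cast hL0Ls
      omega
    exact_mod_cast hnat
  have hmain2 : ∀ x ∈ DA, ∃ e, e ∈ E ∧ distInf e.1 x ≤ 4*Ls := by
    intro x hx
    obtain ⟨hxA, y, hyCA, hxy⟩ := hx
    have hyC2R : y ∈ C2R := hyCA.1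
    have hyA : y ∉ A := hyCA.2
    have hxC2R : x ∈ C2R := hCRsub (hA hxA)
    obtain ⟨u, w, huC, hwC, hduw⟩ :
        ∃ u w, u ∈ C2R ∧ w ∈ C2R ∧ (Ls:ℝ) ≤ (dist1 u w : ℝ) := by
      rcases Nat.lt_or_ge Ls 2 with hsmall | hLs2
      · refine ⟨x, y, hxC2R, hyC2R, ?_⟩
        have hne : x ≠ y := fun h => hyA (h ▸ hxA)
        have : dist1 x y ≠ 0 := fun h => hne (dist1_eq_zero_iff'.mp h)
        have : Ls ≤ dist1 x y := by omega
        exact_mod_cast this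
      · exact hdiam hLs2
    have hxSr : x ∈ Sr ω ((Ls:ℕ):ℝ) :=
      ⟨(comp_subset' hC2R hxC2R).1, u, hclusterC2R x hxC2R huC, w, hclusterC2R x hxC2R hwC, hduw⟩
    have hySr : y ∈ Sr ω ((Ls:ℕ):ℝ) :=
      ⟨(comp_subset' hC2R hyC2R).1, u, hclusterC2R y hyC2R huC, w, hclusterC2R y hyC2R hwC, hduw⟩
    set zc : Pt d := fun i => x i + (if y i = x i + 2*(Ls:ℤ) then 1 else 0) with hzc
    have hzball : zc ∈ ballZ (0 : Pt d) (2*R) := by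
      rw [ballZ, Set.mem_setOf_eq, distInf_le_iff']
      intro i
      have h1 := distInf_le_iff'.mp (hABall hxA) i
      simp only [Pi.zero_apply] at h1
      rw [hzc]
      by_cases hc : y i = x i + 2*(Ls:ℤ) <;> simp [hc] <;> omega
    have hxbox : x ∈ boxI zc (-(2*Ls : ℤ)) (2*Ls) := by
      intro i
      rw [hzc]
      by_cases hc : y i = x i + 2*(Ls:ℤ) <;> simp [hc] <;> omega
    have hybox : y ∈ boxI zc (-(2*Ls : ℤ)) (2*Ls) := by
      intro i
      have h1 := distInf_coord_le' (x := x) (y := y) i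
      have h2 : (x i - y i).natAbs ≤ 2*Ls := le_trans h1 hxy
      rw [hzc]
      by_cases hc : y i = x i + 2*(Ls:ℤ) <;> simp [hc] <;> omega
    have hconn := hω.2 zc hzball x ⟨hxSr, hxbox⟩ y ⟨hySr, hybox⟩
    obtain ⟨e, heE, he1, -⟩ := crossing' Set.inter_subset_left hconn.2.2 hxA hyA
    refine ⟨e, heE, ?_⟩
    rw [distInf_le_iff']
    intro i
    have h1 := (he1.2 i).1
    have h2 := (he1.2 i).2
    rw [hzc] at h1 h2
    by_cases hc : y i = x i + 2*(Ls:ℤ) <;> simp [hc] at h1 h2 <;> omega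
  choose! F2 hF2 using hmain2
  have h1b : DA.ncard ≤ (11*Ls)^d * E.ncard := by
    refine count_image_le _ hDAfin E hEfin _ F2 (fun a ha => (hF2 a ha).1) ?_
    intro b
    have hsubf : {a | a ∈ DA ∧ F2 a = b} ⊆ ballZ b.1 (4*Ls) := by
      rintro a ⟨haD, rfl⟩
      exact (hF2 a haD).2
    calc {a | a ∈ DA ∧ F2 a = b}.ncard ≤ (ballZ b.1 (4*Ls)).ncard :=
          Set.ncard_le_ncard hsubf (ballZ_finite _ _)
      _ ≤ (2*(4*Ls)+1)^d := ballZ_ncard_le _ _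
      _ ≤ (11*Ls)^d := Nat.pow_le_pow_left (by omega) d
  have hLsR : (0:ℝ) < (Ls:ℝ) := by exact_mod_cast hLspos
  refine ⟨⟨?_, ?_⟩, ?_⟩
  · -- goal 1a
    have hpos : (0:ℝ) < (d:ℝ) * 2^d := by
      apply mul_pos _ (by positivity)
      exact_mod_cast hd0
    rw [div_mul_eq_mul_div, one_mul, div_le_iff₀ hpos]
    calc ((bdWithin L0 G MA).ncard : ℝ) ≤ ((d * 2^d * E.ncard : ℕ) : ℝ) := by
          exact_mod_cast h1a
      _ = (E.ncard : ℝ) * ((d:ℝ) * 2^d) := by push_cast; ring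
  · -- goal 1b
    rw [div_le_iff₀ (by positivity : (0:ℝ) < (11*(Ls:ℝ))^d)]
    calc (DA.ncard : ℝ) ≤ (((11*Ls)^d * E.ncard : ℕ) : ℝ) := by exact_mod_cast h1b
      _ = (E.ncard : ℝ) * (11*(Ls:ℝ))^d := by push_cast; ring
  · -- volume bound
    intro _hρ
    have hL0R : (0:ℝ) < (L0:ℝ) := by exact_mod_cast hL0
    have hMc0 : (0:ℝ) ≤ (MA.ncard : ℝ) := by positivity
    have hDc0 : (0:ℝ) ≤ (DA.ncard : ℝ) := by positivity
    have h6d : (36:ℝ) ≤ 6^d := by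
      calc (36:ℝ) = 6^2 := by norm_num
        _ ≤ 6^d := pow_le_pow_right₀ (by norm_num) hd
    by_cases hsplit : A ⊆ DA
    · have : (A.ncard : ℝ) ≤ DA.ncard := by
        exact_mod_cast Set.ncard_le_ncard hsplit hDAfin
      have h1 : (0:ℝ) ≤ 6^d * (L0:ℝ)^d * MA.ncard := by positivity
      linarith
    by_cases hbig : 3*Ls ≤ R + 1
    · -- general branch
      have hADfin : (A \ DA).Finite := hAfin.subset Set.diff_subset
      set X := latPt Ls '' (A \ DA) with hXdef
      have hXfin : X.Finite := hADfin.image _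
      have hxsmem : ∀ x ∈ A \ DA,
          latPt Ls x ∈ lattice d Ls ∩ ballZ (0 : Pt d) (2*R - 2*Ls) := by
        intro x hxAD
        refine ⟨latPt_mem_lattice _ _, ?_⟩
        rw [ballZ, Set.mem_setOf_eq, distInf_le_iff']
        intro i
        have h1 := distInf_le_iff'.mp (hABall hxAD.1) i
        have h2 := (mem_box_latPt hLspos x) i
        simp only [Pi.zero_apply] at h1 ⊢
        omega
      have hboxMA : ∀ x ∈ A \ DA, G ∩ box (latPt Ls x) Ls ⊆ MA := by
        intro x hxAD z hz
        obtain ⟨hzG, hzbox⟩ := hz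
        obtain ⟨Cz, hCz⟩ := (hGA z hzG).1 (fun _ => false)
        rw [subCorner_false'] at hCz
        obtain ⟨q, hq⟩ := bigComp_nonempty hCz
        have hqC2R : q ∈ C2R := hCsub z hzG Cz hCz hq
        have hqbox : q ∈ box z L0 := (bigComp_subset hCz hq).2
        have hqnear : distInf x q ≤ 2*Ls := by
          rw [distInf_le_iff']
          intro i
          have h1 := (mem_box_latPt hLspos x) i
          have h2 := hzbox i
          have h3 := hqbox i
          have hcast : (L0:ℤ) ≤ (Ls:ℤ) := by exact_mod_cast hL0Ls
          omega
        have hqA : q ∈ A := by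
          by_contra hqA
          exact hxAD.2 ⟨hxAD.1, q, ⟨hqC2R, hqA⟩, hqnear⟩
        exact ⟨hzG, Cz, hCz, ⟨q, hq, hqA⟩⟩
      have hMlb : (X.ncard : ℝ) * (((Ls:ℝ)/(L0:ℝ))^d * F) ≤ MA.ncard := by
        refine sum_boxes_le_ncard hLspos X hXfin ?_ MA hMAfin G hGfin ?_ _ ?_
        · rintro xs ⟨x, hx, rfl⟩
          exact latPt_mem_lattice _ _
        · rintro xs ⟨x, hx, rfl⟩
          exact hboxMA x hx
        · rintro xs ⟨x, hx, rfl⟩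
          exact (hG3 _ (hxsmem x hx)).2
      have hADub : (A \ DA).ncard ≤ Ls^d * X.ncard := by
        refine ncard_le_mul_ncard_image' hADfin (latPt Ls) _ ?_
        intro b
        have hsubf : {a | a ∈ A \ DA ∧ latPt Ls a = b} ⊆ box b Ls := by
          rintro a ⟨ha, rfl⟩
          exact mem_box_latPt hLspos a
        exact (Set.ncard_le_ncard hsubf (box_finite _ _)).trans (box_ncard_le _ _)
      have hAsplit : (A.ncard : ℝ) ≤ ((A \ DA).ncard : ℝ) + DA.ncard := by
        have h2 := Set.ncard_union_le (A \ DA) DA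
        rw [Set.diff_union_of_subset hDAA] at h2
        exact_mod_cast h2
      have hkpos : (0:ℝ) < ((Ls:ℝ)/(L0:ℝ))^d := pow_pos (div_pos hLsR hL0R) d
      set k := ((Ls:ℝ)/(L0:ℝ))^d with hk
      have hXc0 : (0:ℝ) ≤ (X.ncard : ℝ) := by positivity
      have hLseq : (Ls:ℝ)^d = k * (L0:ℝ)^d := by
        rw [hk, div_pow, div_mul_cancel₀]
        positivity
      have s1 : k * X.ncard ≤ (8/5) * MA.ncard := by
        have ha : (5/8:ℝ) * (k * X.ncard) ≤ F * (k * X.ncard) :=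
          mul_le_mul_of_nonneg_right hF58 (mul_nonneg hkpos.le hXc0)
        have hb : F * (k * X.ncard) = (X.ncard : ℝ) * (k * F) := by ring
        rw [hb] at ha
        linarith [hMlb]
      have s2 : ((A \ DA).ncard : ℝ) ≤ (Ls:ℝ)^d * X.ncard := by
        have := hADub
        calc ((A \ DA).ncard : ℝ) ≤ ((Ls^d * X.ncard : ℕ) : ℝ) := by exact_mod_cast this
          _ = (Ls:ℝ)^d * X.ncard := by push_cast; ring
      have s3 : (Ls:ℝ)^d * X.ncard = (L0:ℝ)^d * (k * X.ncard) := by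
        rw [hLseq]; ring
      have s4 : (L0:ℝ)^d * (k * X.ncard) ≤ (L0:ℝ)^d * ((8/5) * MA.ncard) :=
        mul_le_mul_of_nonneg_left s1 (by positivity)
      have s5 : (L0:ℝ)^d * ((8/5) * MA.ncard) ≤ 6^d * (L0:ℝ)^d * MA.ncard := by
        have ha : (8/5:ℝ) * MA.ncard ≤ 6^d * MA.ncard :=
          mul_le_mul_of_nonneg_right (by linarith) hMc0
        have hb := mul_le_mul_of_nonneg_left ha (pow_nonneg hL0R.le d)
        calc (L0:ℝ)^d * ((8/5) * MA.ncard) ≤ (L0:ℝ)^d * (6^d * MA.ncard) := hb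
          _ = 6^d * (L0:ℝ)^d * MA.ncard := by ring
      linarith
    · -- special branch : Ls = 1, R = 1, L0 = 1
      push_neg at hbig
      have hLs1 : Ls = 1 := by
        by_contra hne
        have hLs2 : 2 ≤ Ls := by omega
        have h11 : 2^11 ≤ Ls^11 := Nat.pow_le_pow_left hLs2 11
        have h13 : 3*Ls ≤ Ls^12 := by
          calc 3*Ls ≤ 2^11*Ls := by omega
            _ ≤ Ls^11*Ls := Nat.mul_le_mul_right _ h11
            _ = Ls^12 := by ring
        omega
      have hRone : R = 1 := by omega
      have hL0one : L0 = 1 := by omega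
      obtain ⟨x0, hx0AD⟩ := Set.not_subset.mp hsplit
      have h0ball : (0 : Pt d) ∈ ballZ (0 : Pt d) (2*R - 2*Ls) := distInf_self_zero _
      have hlb := (hG3 0 ⟨zero_mem_lattice Ls, h0ball⟩).2
      have hkpos : (0:ℝ) < ((Ls:ℝ)/(L0:ℝ))^d * F := by
        apply mul_pos _ hFpos
        exact pow_pos (div_pos hLsR (by exact_mod_cast hL0)) d
      have hnonempty : (G ∩ box (0 : Pt d) Ls).Nonempty := by
        rw [Set.nonempty_iff_ne_empty]
        intro hempty
        rw [hempty] at hlb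
        simp at hlb
        linarith
      obtain ⟨z0, hz0G, hz0box⟩ := hnonempty
      obtain ⟨Cz, hCz⟩ := (hGA z0 hz0G).1 (fun _ => false)
      rw [subCorner_false'] at hCz
      obtain ⟨q, hq⟩ := bigComp_nonempty hCz
      have hqC2R : q ∈ C2R := hCsub z0 hz0G Cz hCz hq
      have hqbox : q ∈ box z0 L0 := (bigComp_subset hCz hq).2
      have hqnear : distInf x0 q ≤ 2*Ls := by
        rw [distInf_le_iff']
        intro i
        have h1 := distInf_le_iff'.mp (hABall hx0AD.1) i
        have h2 := hz0box i
        have h3 := hqbox i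
        simp only [Pi.zero_apply] at h1 h2
        omega
      have hqA : q ∈ A := by
        by_contra hqA
        exact hx0AD.2 ⟨hx0AD.1, q, ⟨hqC2R, hqA⟩, hqnear⟩
      have hz0MA : z0 ∈ MA := ⟨hz0G, Cz, hCz, ⟨q, hq, hqA⟩⟩
      have hMA1 : 1 ≤ MA.ncard := (Set.ncard_pos hMAfin).mpr ⟨z0, hz0MA⟩
      have hAcard : A.ncard ≤ 3^d := by
        calc A.ncard ≤ (ballZ (0 : Pt d) R).ncard :=
              Set.ncard_le_ncard hABall (ballZ_finite _ _)
          _ ≤ (2*R+1)^d := ballZ_ncard_le _ _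
          _ = 3^d := by rw [hRone]
      have hMA1R : (1:ℝ) ≤ (MA.ncard : ℝ) := by exact_mod_cast hMA1
      have hAcardR : (A.ncard : ℝ) ≤ 3^d := by exact_mod_cast hAcard
      have h36 : (3:ℝ)^d ≤ 6^d := pow_le_pow_left₀ (by norm_num) (by norm_num) d
      have hL0one' : ((L0:ℝ))^d = 1 := by rw [hL0one]; simp
      have hpow6 : (0:ℝ) ≤ 6^d := by positivity
      have h2 : (3:ℝ)^d ≤ 6^d * (MA.ncard : ℝ) :=
        h36.trans (le_mul_of_one_le_right hpow6 hMA1R)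
      have h3 : (6:ℝ)^d * (L0:ℝ)^d * (MA.ncard : ℝ) = 6^d * (MA.ncard : ℝ) := by
        rw [hL0one']; ring
      linarith [hDc0]


end Perco
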